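/- Under hypothesis (H1), φ_{A,k}(y) = -∞ if and only if y + ℝk ⊆ A. -/

import Mathlib

open Set Pointwise

noncomputable def phiF {Y : Type*} [AddCommGroup Y] [Module ℝ Y] (A : Set Y) (k : Y) (y : Y) : EReal :=
  sInf ((fun t : ℝ => (t : EReal)) '' {t : ℝ | y - t • k ∈ A})

def recCone {Y : Type*} [AddCommGroup Y] [Module ℝ Y] (A : Set Y) : Set Y :=
  {u | ∀ a ∈ A, ∀ t : ℝ, 0 ≤ t → a + t • u ∈ A}

def algInterior {Y : Type*} [AddCommGroup Y] [Module ℝ Y] (C : Set Y) : Set Y :=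
  {x ∈ C | ∀ y : Y, ∃ ε : ℝ, 0 < ε ∧ ∀ t : ℝ, 0 ≤ t → t ≤ ε → x + t • y ∈ C}

theorem stmt_4 {Y : Type*} [AddCommGroup Y] [Module ℝ Y] [TopologicalSpace Y]
    [IsTopologicalAddGroup Y] [ContinuousSMul ℝ Y]
    (A : Set Y) (hAc : IsClosed A) (hAne : A.Nonempty) (hAp : A ≠ Set.univ)
    (k : Y) (hk : k ≠ 0) (hrec : ∀ a ∈ A, ∀ t : ℝ, 0 ≤ t → a - t • k ∈ A) :
    ∀ y : Y, phiF A k y = ⊥ ↔ ∀ t : ℝ, y + t • k ∈ A := by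
  intro y
  have hup : ∀ s t : ℝ, s ≤ t → y - s • k ∈ A → y - t • k ∈ A := by
    intro s t hst hs
    have := hrec _ hs (t - s) (by linarith)
    have h : y - s • k - (t - s) • k = y - t • k := by
      rw [sub_smul]; abel
    rwa [h] at this
  constructor
  · intro h t
    rw [phiF, sInf_eq_bot] at h
    obtain ⟨x, hx, hxlt⟩ := h ((-t : ℝ) : EReal) (by exact_mod_cast EReal.bot_lt_coe _)
    obtain ⟨s, hs, rfl⟩ := hx
    have hst : s ≤ -t := le_of_lt (by simpa using EReal.coe_lt_coe_iff.mp hxlt)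
    have := hup s (-t) hst hs
    rwa [neg_smul, sub_neg_eq_add] at this
  · intro h
    rw [phiF, sInf_eq_bot]
    intro b hb
    rcases b with _ | _ | r
    · exact absurd hb (lt_irrefl _)
    · exact ⟨((0:ℝ) : EReal), ⟨0, by simpa using h 0, rfl⟩, by exact_mod_cast EReal.coe_lt_top 0⟩
    · refine ⟨((r - 1 : ℝ) : EReal), ⟨r - 1, ?_, rfl⟩, EReal.coe_lt_coe_iff.mpr (sub_one_lt r)⟩
      have := h (-(r - 1))
      rwa [neg_smul, ← sub_eq_add_neg] at this
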